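/- The standardisation map on semistandard domino tableaux: for a standard domino tableau T₀ of shape λ ∈ P⁰(n) and a weight μ = (μ₀, μ₁, ...) with μ₀ = 0 whenever the top-leftmost domino of T₀ is vertical and Des(T₀)\{0} ⊆ set(μ̄) (μ̄ the composition obtained by deleting zero parts of μ), there exists exactly one semistandard domino tableau T of weight μ whose standardisation is T₀. -/
import Mathlib


open scoped Classical

noncomputable section

/-- Two cells of a Young diagram are adjacent (form a possible domino). -/
def dominoAdj (c d : ℕ × ℕ) : Prop :=
  (c.1 = d.1 ∧ (c.2 + 1 = d.2 ∨ d.2 + 1 = c.2)) ∨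
  (c.2 = d.2 ∧ (c.1 + 1 = d.1 ∨ d.1 + 1 = c.1))

/-- `tile` is a tiling of the Young diagram `μ` by dominoes: it is an involution of
the cells of `μ` matching each cell with an adjacent one (and the identity elsewhere). -/
def IsDominoTiling (μ : YoungDiagram) (tile : ℕ × ℕ → ℕ × ℕ) : Prop :=
  (∀ c ∈ μ.cells, tile c ∈ μ.cells ∧ tile (tile c) = c ∧ dominoAdj c (tile c)) ∧
  ∀ c ∉ μ.cells, tile c = c

/-- `(tile, lab)` is a semistandard domino tableau of shape `μ`: a domino tiling of `μ`
with non-negative integer labels (constant on each domino), weakly increasing along rows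
and strictly increasing down columns (where the two cells of a vertical domino do not
count as a column violation). Labels vanish outside `μ`. -/
def IsSSDT (μ : YoungDiagram) (tile : ℕ × ℕ → ℕ × ℕ) (lab : ℕ × ℕ → ℕ) : Prop :=
  IsDominoTiling μ tile ∧
  (∀ c ∈ μ.cells, lab (tile c) = lab c) ∧
  (∀ c ∉ μ.cells, lab c = 0) ∧
  (∀ i j : ℕ, (i, j) ∈ μ.cells → (i, j + 1) ∈ μ.cells → lab (i, j) ≤ lab (i, j + 1)) ∧
  (∀ i j : ℕ, (i, j) ∈ μ.cells → (i + 1, j) ∈ μ.cells → tile (i, j) ≠ (i + 1, j) →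
    lab (i, j) < lab (i + 1, j))

/-- The extra rule on semistandard domino tableaux: if the top-leftmost domino is
vertical then it cannot be labelled `0`. -/
def ZeroRule (μ : YoungDiagram) (tile : ℕ × ℕ → ℕ × ℕ) (lab : ℕ × ℕ → ℕ) : Prop :=
  tile (0, 0) = (1, 0) → lab (0, 0) ≠ 0

/-- `(tile, lab)` is a standard domino tableau of shape `μ` with `n` dominoes:
a semistandard domino tableau in which each label `1, ..., n` is used by exactly
one domino. -/
def IsSDT (μ : YoungDiagram) (n : ℕ) (tile : ℕ × ℕ → ℕ × ℕ) (lab : ℕ × ℕ → ℕ) : Prop :=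
  IsSSDT μ tile lab ∧ (∀ c ∈ μ.cells, 1 ≤ lab c ∧ lab c ≤ n) ∧
  ∀ k, 1 ≤ k → k ≤ n → (μ.cells.filter fun c => lab c = k).card = 2

/-- Descent set of a standard domino tableau, a subset of `{0, 1, ..., n-1}`:
`0` is a descent iff the domino labelled `1` is vertical, and `i > 0` is a descent
iff (a cell of) `i+1` lies strictly below (a cell of) `i`. -/
def sdtDes (μ : YoungDiagram) (n : ℕ) (x : (ℕ × ℕ → ℕ × ℕ) × (ℕ × ℕ → ℕ)) : Finset ℕ :=
  (Finset.range n).filter fun i =>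
    if i = 0 then ∃ c ∈ μ.cells, x.2 c = 1 ∧ (x.1 c).2 = c.2
    else ∃ c ∈ μ.cells, ∃ d ∈ μ.cells, x.2 c = i ∧ x.2 d = i + 1 ∧ c.1 < d.1

/-- The labels of the standardisation of a semistandard domino tableau `x` of shape
`μ`: dominoes are relabelled `1, ..., n` in order of their labels, dominoes of equal
label being taken from left to right. -/
def stdLab (μ : YoungDiagram) (x : (ℕ × ℕ → ℕ × ℕ) × (ℕ × ℕ → ℕ)) (c : ℕ × ℕ) : ℕ :=
  if c ∈ μ.cells then
    (μ.cells.filter fun b => x.2 b < x.2 c ∨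
      (x.2 b = x.2 c ∧ min b.2 (x.1 b).2 < min c.2 (x.1 c).2)).card / 2 + 1
  else 0

section Stmt18Aux

open Finset

variable {μ : YoungDiagram} {tile : ℕ × ℕ → ℕ × ℕ} {lab : ℕ × ℕ → ℕ} {n : ℕ}

lemma mem_up_left {i1 i2 j1 j2 : ℕ} (hi : i1 ≤ i2) (hj : j1 ≤ j2)
    (h : (i2, j2) ∈ μ.cells) : (i1, j1) ∈ μ.cells := by
  rw [YoungDiagram.mem_cells] at *
  exact μ.up_left_mem hi hj h

lemma tile_ne (h : IsDominoTiling μ tile) {c : ℕ × ℕ} (hc : c ∈ μ.cells) : tile c ≠ c := by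
  have adj := (h.1 c hc).2.2
  intro he
  rw [he] at adj
  rcases adj with ⟨_, h2 | h2⟩ | ⟨_, h2 | h2⟩ <;> omega

lemma col_le (h : IsSSDT μ tile lab) {i j : ℕ} (h2 : (i + 1, j) ∈ μ.cells) :
    lab (i, j) ≤ lab (i + 1, j) := by
  have h1 : (i, j) ∈ μ.cells := mem_up_left (Nat.le_succ i) le_rfl h2
  by_cases ht : tile (i, j) = (i + 1, j)
  · have hcst := h.2.1 _ h1
    rw [ht] at hcst
    omega
  · exact (h.2.2.2.2 i j h1 h2 ht).le

lemma col_le' (h : IsSSDT μ tile lab) {i i' j : ℕ} (hle : i ≤ i')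
    (h2 : (i', j) ∈ μ.cells) : lab (i, j) ≤ lab (i', j) := by
  induction i', hle using Nat.le_induction with
  | base => exact le_rfl
  | succ m hm ih =>
      have hm2 : (m, j) ∈ μ.cells := mem_up_left (Nat.le_succ m) le_rfl h2
      exact le_trans (ih hm2) (col_le h h2)

lemma row_le' (h : IsSSDT μ tile lab) {i j j' : ℕ} (hle : j ≤ j')
    (h2 : (i, j') ∈ μ.cells) : lab (i, j) ≤ lab (i, j') := by
  induction j', hle using Nat.le_induction with
  | base => exact le_rfl
  | succ m hm ih =>
      have hm2 : (i, m) ∈ μ.cells := mem_up_left le_rfl (Nat.le_succ m) h2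
      exact le_trans (ih hm2) (h.2.2.2.1 i m hm2 h2)

lemma nw_le (h : IsSSDT μ tile lab) {c d : ℕ × ℕ} (hc : c ∈ μ.cells)
    (h1 : d.1 ≤ c.1) (h2 : d.2 ≤ c.2) : lab d ≤ lab c := by
  have hc' : (c.1, c.2) ∈ μ.cells := by rwa [Prod.mk.eta]
  have hm : (d.1, c.2) ∈ μ.cells := mem_up_left h1 le_rfl hc'
  have e1 : lab (d.1, d.2) ≤ lab (d.1, c.2) := row_le' h h2 hm
  have e2 : lab (d.1, c.2) ≤ lab (c.1, c.2) := col_le' h h1 hc'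
  exact le_trans e1 e2

lemma sdt_exists (h : IsSDT μ n tile lab) {k : ℕ} (h1 : 1 ≤ k) (h2 : k ≤ n) :
    ∃ c ∈ μ.cells, lab c = k := by
  have hcard := h.2.2 k h1 h2
  have hpos : 0 < (μ.cells.filter fun c => lab c = k).card := by omega
  obtain ⟨c, hc⟩ := Finset.card_pos.1 hpos
  exact ⟨c, (Finset.mem_filter.1 hc).1, (Finset.mem_filter.1 hc).2⟩

lemma sdt_same_label (h : IsSDT μ n tile lab) {b c : ℕ × ℕ} (hb : b ∈ μ.cells)
    (hc : c ∈ μ.cells) (he : lab b = lab c) : b = c ∨ b = tile c := by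
  have h2 := h.2.2 (lab c) (h.2.1 c hc).1 (h.2.1 c hc).2
  have htc : tile c ∈ μ.cells := (h.1.1.1 c hc).1
  have hne : tile c ≠ c := tile_ne h.1.1 hc
  have hsub : ({c, tile c} : Finset (ℕ × ℕ)) ⊆ μ.cells.filter fun b => lab b = lab c := by
    intro a ha
    rcases Finset.mem_insert.1 ha with rfl | ha
    · exact Finset.mem_filter.2 ⟨hc, rfl⟩
    · rw [Finset.mem_singleton] at ha
      subst ha
      exact Finset.mem_filter.2 ⟨htc, h.1.2.1 c hc⟩
  have hcard2 : ({c, tile c} : Finset (ℕ × ℕ)).card = 2 := by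
    rw [Finset.card_insert_of_notMem (by simp [Ne.symm hne]), Finset.card_singleton]
  have heq : ({c, tile c} : Finset (ℕ × ℕ)) = μ.cells.filter fun b => lab b = lab c :=
    Finset.eq_of_subset_of_card_le hsub (by omega)
  have hbm : b ∈ ({c, tile c} : Finset (ℕ × ℕ)) := by
    rw [heq]
    exact Finset.mem_filter.2 ⟨hb, he⟩
  simpa using hbm

lemma filter_split (s : Finset (ℕ × ℕ)) (f : ℕ × ℕ → ℕ) (i : ℕ) :
    (s.filter fun c => f c ≤ i + 1).card =
      (s.filter fun c => f c ≤ i).card + (s.filter fun c => f c = i + 1).card := by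
  rw [← Finset.card_union_of_disjoint]
  · congr 1
    rw [← Finset.filter_or]
    exact Finset.filter_congr fun c _ => by omega
  · rw [Finset.disjoint_left]
    intro a ha hb
    have h1 := (Finset.mem_filter.1 ha).2
    have h2 := (Finset.mem_filter.1 hb).2
    omega

lemma sdt_count (h : IsSDT μ n tile lab) : ∀ m, m ≤ n →
    (μ.cells.filter fun c => lab c ≤ m).card = 2 * m := by
  intro m
  induction m with
  | zero =>
      intro _
      have he : μ.cells.filter (fun c => lab c ≤ 0) = ∅ := by
        rw [Finset.filter_eq_empty_iff]
        intro c hc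
        have := (h.2.1 c hc).1
        omega
      rw [he]
      simp
  | succ m ih =>
      intro hm
      rw [filter_split, ih (by omega), h.2.2 (m + 1) (by omega) hm]
      omega

lemma sdt_count_lt (h : IsSDT μ n tile lab) {c : ℕ × ℕ} (hc : c ∈ μ.cells) :
    (μ.cells.filter fun b => lab b < lab c).card = 2 * (lab c - 1) := by
  have h1 := h.2.1 c hc
  have he : μ.cells.filter (fun b => lab b < lab c) =
      μ.cells.filter fun b => lab b ≤ lab c - 1 :=
    Finset.filter_congr fun b _ => by omega
  rw [he, sdt_count h _ (by omega)]

lemma sdt_chain (h : IsSDT μ n tile lab) {a : ℕ} (ha : 1 ≤ a) :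
    ∀ t, ∀ d ∈ μ.cells, lab d = a + t →
      (∀ k, a ≤ k → k < a + t →
        ¬ ∃ c ∈ μ.cells, ∃ e ∈ μ.cells, lab c = k ∧ lab e = k + 1 ∧ c.1 < e.1) →
      ∃ f ∈ μ.cells, lab f = a ∧ d.1 ≤ f.1 := by
  intro t
  induction t with
  | zero => exact fun d hd hld _ => ⟨d, hd, by omega, le_rfl⟩
  | succ t ih =>
      intro d hd hld hnd
      obtain ⟨c, hc, hlc⟩ := sdt_exists h (k := a + t) (by omega)
        (by have := (h.2.1 d hd).2; omega)
      have hrow : d.1 ≤ c.1 := by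
        by_contra hlt
        exact hnd (a + t) (by omega) (by omega) ⟨c, hc, d, hd, hlc, by omega, by omega⟩
      obtain ⟨f, hf, hlf, hcf⟩ := ih c hc hlc fun k h1 h2 => hnd k h1 (by omega)
      exact ⟨f, hf, hlf, le_trans hrow hcf⟩

lemma sdt_descent (h : IsSDT μ n tile lab) {i j : ℕ} (h1 : (i, j) ∈ μ.cells)
    (h2 : (i + 1, j) ∈ μ.cells) (ht : tile (i, j) ≠ (i + 1, j)) :
    ∃ k, lab (i, j) ≤ k ∧ k < lab (i + 1, j) ∧
      ∃ c ∈ μ.cells, ∃ e ∈ μ.cells, lab c = k ∧ lab e = k + 1 ∧ c.1 < e.1 := by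
  have hab : lab (i, j) < lab (i + 1, j) := h.1.2.2.2.2 i j h1 h2 ht
  have ha1 : 1 ≤ lab (i, j) := (h.2.1 _ h1).1
  by_contra hcon
  have hnd : ∀ k, lab (i, j) ≤ k → k < lab (i, j) + (lab (i + 1, j) - lab (i, j)) →
      ¬ ∃ c ∈ μ.cells, ∃ e ∈ μ.cells, lab c = k ∧ lab e = k + 1 ∧ c.1 < e.1 :=
    fun k hk1 hk2 hex => hcon ⟨k, hk1, by omega, hex⟩
  obtain ⟨f, hf, hlf, hrow⟩ := sdt_chain h ha1 (lab (i + 1, j) - lab (i, j)) (i + 1, j) h2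
    (by omega) hnd
  rcases sdt_same_label h hf h1 hlf with rfl | hfe
  · omega
  · have adj := (h.1.1.1 _ h1).2.2
    rw [← hfe] at adj
    rcases adj with ⟨he1, _⟩ | ⟨he2, he1 | he1⟩
    · simp at he1; omega
    · apply ht
      rw [← hfe]
      have : f = (f.1, f.2) := rfl
      rw [this]
      simp at he1 he2
      simp at hrow
      have hf1 : f.1 = i + 1 := by omega
      rw [hf1, ← he2]
    · simp at he1; omega

end Stmt18Aux

section Stmt18Aux2

def auxS (w : ℕ →₀ ℕ) (i : ℕ) : ℕ := ∑ j ∈ Finset.range (i + 1), w j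

lemma auxS_mono (w : ℕ →₀ ℕ) {a b : ℕ} (hab : a ≤ b) : auxS w a ≤ auxS w b :=
  Finset.sum_le_sum_of_subset (Finset.range_subset_range.2 (by omega))

lemma auxS_succ (w : ℕ →₀ ℕ) (i : ℕ) : auxS w (i + 1) = auxS w i + w (i + 1) :=
  Finset.sum_range_succ _ _

lemma auxS_zero (w : ℕ →₀ ℕ) : auxS w 0 = w 0 := by simp [auxS]

lemma auxS_le (w : ℕ →₀ ℕ) (i : ℕ) : auxS w i ≤ w.sum fun _ m => m := by
  rw [Finsupp.sum]
  rw [auxS, ← Finset.sum_filter_ne_zero]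
  apply Finset.sum_le_sum_of_subset
  intro j hj
  rw [Finsupp.mem_support_iff]
  exact (Finset.mem_filter.1 hj).2

lemma exists_auxS (w : ℕ →₀ ℕ) {n k : ℕ} (hw : w.sum (fun _ m => m) = n) (hk : k ≤ n) :
    ∃ i, k ≤ auxS w i := by
  refine ⟨w.support.sup id, ?_⟩
  have hsub : w.support ⊆ Finset.range (w.support.sup id + 1) := by
    intro j hj
    rw [Finset.mem_range]
    have : id j ≤ w.support.sup id := Finset.le_sup hj
    simpa using Nat.lt_succ_of_le this
  have heq : auxS w (w.support.sup id) = w.sum fun _ m => m := by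
    rw [Finsupp.sum, auxS]
    exact (Finset.sum_subset hsub fun x _ hx => by
      rwa [← Finsupp.notMem_support_iff]).symm
  omega

noncomputable def auxF (w : ℕ →₀ ℕ) (k : ℕ) : ℕ := sInf {i | k ≤ auxS w i}

lemma auxF_spec (w : ℕ →₀ ℕ) {k : ℕ} (hk : ∃ i, k ≤ auxS w i) :
    k ≤ auxS w (auxF w k) := Nat.sInf_mem hk

lemma auxF_le (w : ℕ →₀ ℕ) {k i : ℕ} (h : k ≤ auxS w i) : auxF w k ≤ i := Nat.sInf_le h

lemma auxF_le_iff (w : ℕ →₀ ℕ) {k i : ℕ} (hk : ∃ i, k ≤ auxS w i) :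
    auxF w k ≤ i ↔ k ≤ auxS w i :=
  ⟨fun h => le_trans (auxF_spec w hk) (auxS_mono w h), auxF_le w⟩

lemma auxF_mono (w : ℕ →₀ ℕ) {k k' : ℕ} (hk : k ≤ k') (h' : ∃ i, k' ≤ auxS w i) :
    auxF w k ≤ auxF w k' :=
  auxF_le w (le_trans hk (auxF_spec w h'))

end Stmt18Aux2

section Stmt18Aux3

lemma minc_tile {μ : YoungDiagram} {tile : ℕ × ℕ → ℕ × ℕ} (h : IsDominoTiling μ tile)
    {c : ℕ × ℕ} (hc : c ∈ μ.cells) :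
    min (tile c).2 (tile (tile c)).2 = min c.2 (tile c).2 := by
  rw [(h.1 c hc).2.1, min_comm]

lemma exists_minc (tile : ℕ × ℕ → ℕ × ℕ) (c : ℕ × ℕ) :
    ∃ c', (c' = c ∨ c' = tile c) ∧ c'.2 = min c.2 (tile c).2 := by
  rcases le_total c.2 (tile c).2 with hle | hle
  · exact ⟨c, Or.inl rfl, (min_eq_left hle).symm⟩
  · exact ⟨tile c, Or.inr rfl, (min_eq_right hle).symm⟩

variable {n : ℕ} {μ : YoungDiagram} {t₀ : (ℕ × ℕ → ℕ × ℕ) × (ℕ × ℕ → ℕ)} {w : ℕ →₀ ℕ}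

lemma fiber_consec (hT₀ : IsSDT μ n t₀.1 t₀.2)
    (hw : w.sum (fun _ m => m) = n)
    (hdes : ∀ k ∈ sdtDes μ n t₀, k ≠ 0 → ∃ m : ℕ, k = ∑ i ∈ Finset.range (m + 1), w i)
    {b c : ℕ × ℕ} (hb : b ∈ μ.cells) (hc : c ∈ μ.cells)
    (hbc : t₀.2 c = t₀.2 b + 1) (hFeq : auxF w (t₀.2 b) = auxF w (t₀.2 c)) :
    min b.2 (t₀.1 b).2 < min c.2 (t₀.1 c).2 := by
  set a := t₀.2 b with ha
  have ha1 : 1 ≤ a := (hT₀.2.1 b hb).1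
  have han : a + 1 ≤ n := by
    have := (hT₀.2.1 c hc).2
    omega
  have hexc : ∃ i, a + 1 ≤ auxS w i := exists_auxS w hw han
  have hSne : ∀ m, a ≠ auxS w m := by
    intro m heq
    have h1 : auxF w a ≤ m := auxF_le w (le_of_eq heq)
    have h2 : a + 1 ≤ auxS w (auxF w (a + 1)) := auxF_spec w hexc
    have h3 : auxS w (auxF w (a + 1)) ≤ auxS w m := auxS_mono w (by rw [← hbc, ← hFeq]; exact h1)
    omega
  have hnodes : a ∉ sdtDes μ n t₀ := by
    intro hmem
    obtain ⟨m, hm⟩ := hdes a hmem (by omega)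
    exact hSne m (by rw [hm]; rfl)
  have hnd : ¬ ∃ c' ∈ μ.cells, ∃ e ∈ μ.cells, t₀.2 c' = a ∧ t₀.2 e = a + 1 ∧ c'.1 < e.1 := by
    intro hex
    apply hnodes
    rw [sdtDes, Finset.mem_filter]
    refine ⟨Finset.mem_range.2 (by omega), ?_⟩
    rw [if_neg (by omega)]
    exact hex
  by_contra hge
  push_neg at hge
  obtain ⟨b', hb'd, hb'c⟩ := exists_minc t₀.1 b
  obtain ⟨c', hc'd, hc'c⟩ := exists_minc t₀.1 c
  have hb'm : b' ∈ μ.cells := by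
    rcases hb'd with rfl | rfl
    · exact hb
    · exact (hT₀.1.1.1 b hb).1
  have hc'm : c' ∈ μ.cells := by
    rcases hc'd with rfl | rfl
    · exact hc
    · exact (hT₀.1.1.1 c hc).1
  have hlb' : t₀.2 b' = a := by
    rcases hb'd with rfl | rfl
    · rfl
    · exact hT₀.1.2.1 b hb
  have hlc' : t₀.2 c' = a + 1 := by
    rcases hc'd with rfl | rfl
    · exact hbc
    · rw [hT₀.1.2.1 c hc]; exact hbc
  have hrow : c'.1 ≤ b'.1 := by
    by_contra hlt
    exact hnd ⟨b', hb'm, c', hc'm, hlb', hlc', by omega⟩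
  have hcol : c'.2 ≤ b'.2 := by omega
  have := nw_le hT₀.1 hb'm hrow hcol
  omega

lemma fiber_lt (hT₀ : IsSDT μ n t₀.1 t₀.2)
    (hw : w.sum (fun _ m => m) = n)
    (hdes : ∀ k ∈ sdtDes μ n t₀, k ≠ 0 → ∃ m : ℕ, k = ∑ i ∈ Finset.range (m + 1), w i)
    {b c : ℕ × ℕ} (hb : b ∈ μ.cells) (hc : c ∈ μ.cells)
    (hbc : t₀.2 b < t₀.2 c) (hFeq : auxF w (t₀.2 b) = auxF w (t₀.2 c)) :
    min b.2 (t₀.1 b).2 < min c.2 (t₀.1 c).2 := by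
  suffices H : ∀ t, ∀ b c : ℕ × ℕ, b ∈ μ.cells → c ∈ μ.cells →
      t₀.2 c = t₀.2 b + t + 1 → auxF w (t₀.2 b) = auxF w (t₀.2 c) →
      min b.2 (t₀.1 b).2 < min c.2 (t₀.1 c).2 by
    exact H (t₀.2 c - t₀.2 b - 1) b c hb hc (by omega) hFeq
  intro t
  induction t with
  | zero => exact fun b c hb hc h1 h2 => fiber_consec hT₀ hw hdes hb hc (by omega) h2
  | succ t ih =>
      intro b c hb hc h1 h2
      obtain ⟨e, he, hle⟩ := sdt_exists hT₀ (k := t₀.2 b + t + 1)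
        (by have := (hT₀.2.1 b hb).1; omega)
        (by have := (hT₀.2.1 c hc).2; omega)
      have hexe : ∃ i, t₀.2 e ≤ auxS w i := exists_auxS w hw (by have := (hT₀.2.1 e he).2; omega)
      have hexc : ∃ i, t₀.2 c ≤ auxS w i := exists_auxS w hw (hT₀.2.1 c hc).2
      have hm1 : auxF w (t₀.2 b) ≤ auxF w (t₀.2 e) := auxF_mono w (by omega) hexe
      have hm2 : auxF w (t₀.2 e) ≤ auxF w (t₀.2 c) := auxF_mono w (by omega) hexc
      have hFe : auxF w (t₀.2 b) = auxF w (t₀.2 e) := by omega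
      have hFe2 : auxF w (t₀.2 e) = auxF w (t₀.2 c) := by omega
      exact lt_trans (ih b e hb he (by omega) hFe)
        (fiber_consec hT₀ hw hdes he hc (by omega) hFe2)

end Stmt18Aux3


/-- Given a standard domino tableau `T₀` of shape `μ ∈ P⁰(n)` and a weight
`w = (w₀, w₁, ...)` summing to `n` with `w₀ = 0` whenever the top-leftmost domino of
`T₀` is vertical, and `Des(T₀) \ {0}` contained in the partial sums of `w`, there is
exactly one semistandard domino tableau of weight `w` whose standardisation is `T₀`. -/
theorem stmt18 (n : ℕ) (hn : 1 ≤ n) (μ : YoungDiagram) (h2n : μ.cells.card = 2 * n)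
    (t₀ : (ℕ × ℕ → ℕ × ℕ) × (ℕ × ℕ → ℕ)) (hT₀ : IsSDT μ n t₀.1 t₀.2)
    (w : ℕ →₀ ℕ) (hw : w.sum (fun _ m => m) = n)
    (hzero : t₀.1 (0, 0) = (1, 0) → w 0 = 0)
    (hdes : ∀ k ∈ sdtDes μ n t₀, k ≠ 0 →
      ∃ m : ℕ, k = ∑ i ∈ Finset.range (m + 1), w i) :
    ∃! x : (ℕ × ℕ → ℕ × ℕ) × (ℕ × ℕ → ℕ),
      (IsSSDT μ x.1 x.2 ∧ ZeroRule μ x.1 x.2 ∧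
        (∀ i, (μ.cells.filter fun c => x.2 c = i).card = 2 * w i)) ∧
      x.1 = t₀.1 ∧ (∀ c, stdLab μ x c = t₀.2 c) := by
  classical
  have hIS : IsDominoTiling μ t₀.1 := hT₀.1.1
  set L : ℕ × ℕ → ℕ := fun c => if c ∈ μ.cells then auxF w (t₀.2 c) else 0 with hLdef
  have hex : ∀ c ∈ μ.cells, ∃ i, t₀.2 c ≤ auxS w i :=
    fun c hc => exists_auxS w hw (hT₀.2.1 c hc).2
  have hLmem : ∀ c ∈ μ.cells, L c = auxF w (t₀.2 c) := by
    intro c hc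
    simp only [hLdef]
    rw [if_pos hc]
  -- the constructed labelling is a SSDT
  have hconst : ∀ c ∈ μ.cells, L (t₀.1 c) = L c := by
    intro c hc
    rw [hLmem _ ((hIS.1 c hc).1), hLmem _ hc, hT₀.1.2.1 c hc]
  have hrow : ∀ i j : ℕ, (i, j) ∈ μ.cells → (i, j + 1) ∈ μ.cells →
      L (i, j) ≤ L (i, j + 1) := by
    intro i j h1 h2
    rw [hLmem _ h1, hLmem _ h2]
    exact auxF_mono w (hT₀.1.2.2.2.1 i j h1 h2) (hex _ h2)
  have hcol : ∀ i j : ℕ, (i, j) ∈ μ.cells → (i + 1, j) ∈ μ.cells →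
      t₀.1 (i, j) ≠ (i + 1, j) → L (i, j) < L (i + 1, j) := by
    intro i j h1 h2 ht
    rw [hLmem _ h1, hLmem _ h2]
    obtain ⟨k, hk1, hk2, hkdes⟩ := sdt_descent hT₀ h1 h2 ht
    have hk0 : k ≠ 0 := by have := (hT₀.2.1 _ h1).1; omega
    have hkn : k < n := by have := (hT₀.2.1 _ h2).2; omega
    have hkmem : k ∈ sdtDes μ n t₀ := by
      rw [sdtDes, Finset.mem_filter]
      exact ⟨Finset.mem_range.2 hkn, by rw [if_neg hk0]; exact hkdes⟩
    obtain ⟨m, hm⟩ := hdes k hkmem hk0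
    have hSm : k = auxS w m := hm
    have hFa : auxF w (t₀.2 (i, j)) ≤ m := auxF_le w (by omega)
    have hFb : m < auxF w (t₀.2 (i + 1, j)) := by
      by_contra hle
      have h3 := auxF_spec w (hex _ h2)
      have h4 : auxS w (auxF w (t₀.2 (i + 1, j))) ≤ auxS w m := auxS_mono w (by omega)
      omega
    omega
  have hSSDT : IsSSDT μ t₀.1 L :=
    ⟨hIS, hconst, fun c hc => if_neg hc, hrow, hcol⟩
  have h00 : (0, 0) ∈ μ.cells := by
    have hpos : 0 < μ.cells.card := by omega
    obtain ⟨c, hc⟩ := Finset.card_pos.1 hpos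
    have hc' : (c.1, c.2) ∈ μ.cells := by rwa [Prod.mk.eta]
    exact mem_up_left (Nat.zero_le _) (Nat.zero_le _) hc'
  have hZero : ZeroRule μ t₀.1 L := by
    intro hv h0
    rw [hLmem _ h00] at h0
    have hw0 := hzero hv
    have h3 := auxF_spec w (hex _ h00)
    rw [h0, auxS_zero, hw0] at h3
    have := (hT₀.2.1 _ h00).1
    omega
  have hcumL : ∀ i, (μ.cells.filter fun c => L c ≤ i).card = 2 * auxS w i := by
    intro i
    have hSn : auxS w i ≤ n := by have := auxS_le w i; omega
    have hcongr : (μ.cells.filter fun c => L c ≤ i) =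
        μ.cells.filter fun c => t₀.2 c ≤ auxS w i := by
      apply Finset.filter_congr
      intro c hc
      rw [hLmem _ hc]
      exact auxF_le_iff w (hex _ hc)
    rw [hcongr, sdt_count hT₀ _ hSn]
  have hwt : ∀ i, (μ.cells.filter fun c => L c = i).card = 2 * w i := by
    intro i
    cases i with
    | zero =>
        have h0 : (μ.cells.filter fun c => L c = 0) = μ.cells.filter fun c => L c ≤ 0 :=
          Finset.filter_congr fun c _ => by omega
        rw [h0, hcumL 0, auxS_zero]
    | succ i =>
        have hsp := filter_split μ.cells L i
        have h1 := hcumL i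
        have h2 := hcumL (i + 1)
        have h3 := auxS_succ w i
        omega
  have hstd : ∀ c, stdLab μ (t₀.1, L) c = t₀.2 c := by
    intro c
    by_cases hc : c ∈ μ.cells
    · simp only [stdLab]
      rw [if_pos hc]
      show (μ.cells.filter fun b => L b < L c ∨
          (L b = L c ∧ min b.2 (t₀.1 b).2 < min c.2 (t₀.1 c).2)).card / 2 + 1 = t₀.2 c
      have hset : (μ.cells.filter fun b => L b < L c ∨
          (L b = L c ∧ min b.2 (t₀.1 b).2 < min c.2 (t₀.1 c).2)) =
          μ.cells.filter fun b => t₀.2 b < t₀.2 c := by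
        apply Finset.filter_congr
        intro b hb
        rw [hLmem _ hb, hLmem _ hc]
        constructor
        · rintro (hlt | ⟨heq, hmin⟩)
          · by_contra hge
            have := auxF_mono w (show t₀.2 c ≤ t₀.2 b by omega) (hex _ hb)
            omega
          · rcases lt_trichotomy (t₀.2 b) (t₀.2 c) with h | h | h
            · exact h
            · exfalso
              rcases sdt_same_label hT₀ hb hc h with rfl | rfl
              · omega
              · rw [minc_tile hIS hc] at hmin
                omega
            · exfalso
              have := fiber_lt hT₀ hw hdes hc hb h heq.symm
              omega
        · intro hlt
          have hle := auxF_mono w hlt.le (hex _ hc)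
          rcases eq_or_lt_of_le hle with heq | hltF
          · exact Or.inr ⟨heq, fiber_lt hT₀ hw hdes hb hc hlt heq⟩
          · exact Or.inl hltF
      rw [hset, sdt_count_lt hT₀ hc]
      have := (hT₀.2.1 c hc).1
      omega
    · simp only [stdLab]
      rw [if_neg hc]
      exact (hT₀.1.2.2.1 c hc).symm
  refine ⟨(t₀.1, L), ⟨⟨hSSDT, hZero, hwt⟩, rfl, hstd⟩, ?_⟩
  -- uniqueness
  rintro y ⟨⟨hS, hZ, hW⟩, hT, hStd⟩
  rw [hT] at hS
  have hA : ∀ c ∈ μ.cells,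
      (μ.cells.filter fun b => y.2 b < y.2 c ∨
        (y.2 b = y.2 c ∧ min b.2 (t₀.1 b).2 < min c.2 (t₀.1 c).2)).card / 2 + 1 = t₀.2 c := by
    intro c hc
    have h := hStd c
    simp only [stdLab, hT] at h
    rw [if_pos hc] at h
    exact h
  have hprec : ∀ b ∈ μ.cells, ∀ c ∈ μ.cells,
      (y.2 b < y.2 c ∨ (y.2 b = y.2 c ∧ min b.2 (t₀.1 b).2 < min c.2 (t₀.1 c).2)) →
      t₀.2 b < t₀.2 c := by
    intro b hb c hc hp
    set Ab := μ.cells.filter fun a => y.2 a < y.2 b ∨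
      (y.2 a = y.2 b ∧ min a.2 (t₀.1 a).2 < min b.2 (t₀.1 b).2) with hAbdef
    set Ac := μ.cells.filter fun a => y.2 a < y.2 c ∨
      (y.2 a = y.2 c ∧ min a.2 (t₀.1 a).2 < min c.2 (t₀.1 c).2) with hAcdef
    have hsub : insert b (insert (t₀.1 b) Ab) ⊆ Ac := by
      intro a ha
      rcases Finset.mem_insert.1 ha with rfl | ha
      · exact Finset.mem_filter.2 ⟨hb, hp⟩
      rcases Finset.mem_insert.1 ha with rfl | ha
      · refine Finset.mem_filter.2 ⟨(hS.1.1 b hb).1, ?_⟩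
        rw [hS.2.1 b hb, minc_tile hS.1 hb]
        exact hp
      · have ham := Finset.mem_filter.1 ha
        refine Finset.mem_filter.2 ⟨ham.1, ?_⟩
        rcases ham.2 with h1 | ⟨h1, h2⟩ <;> rcases hp with h3 | ⟨h3, h4⟩ <;> omega
    have hbA : b ∉ insert (t₀.1 b) Ab := by
      rw [Finset.mem_insert]
      rintro (he | hm)
      · exact tile_ne hS.1 hb he.symm
      · have := (Finset.mem_filter.1 hm).2
        omega
    have htA : t₀.1 b ∉ Ab := by
      intro hm
      have h1 := (Finset.mem_filter.1 hm).2
      rw [hS.2.1 b hb, minc_tile hS.1 hb] at h1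
      omega
    have hcard : Ab.card + 2 ≤ Ac.card := by
      have h1 := Finset.card_le_card hsub
      rw [Finset.card_insert_of_notMem hbA, Finset.card_insert_of_notMem htA] at h1
      omega
    have h2 := hA b hb
    have h3 := hA c hc
    rw [← hAbdef] at h2
    rw [← hAcdef] at h3
    omega
  have hmono : ∀ b ∈ μ.cells, ∀ c ∈ μ.cells, t₀.2 b ≤ t₀.2 c → y.2 b ≤ y.2 c := by
    intro b hb c hc hle
    rcases eq_or_lt_of_le hle with heq | hlt
    · rcases sdt_same_label hT₀ hb hc heq with rfl | rfl
      · exact le_rfl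
      · exact le_of_eq (hS.2.1 c hc)
    · by_contra hgt
      have := hprec c hc b hb (Or.inl (by omega))
      omega
  have hcum' : ∀ i, (μ.cells.filter fun c => y.2 c ≤ i).card = 2 * auxS w i := by
    intro i
    induction i with
    | zero =>
        have h0 : (μ.cells.filter fun c => y.2 c ≤ 0) =
            μ.cells.filter fun c => y.2 c = 0 :=
          Finset.filter_congr fun c _ => by omega
        rw [h0, hW 0, auxS_zero]
    | succ i ih =>
        have hsp := filter_split μ.cells y.2 i
        have h2 := hW (i + 1)
        have h3 := auxS_succ w i
        omega
  have hseg : ∀ i, (μ.cells.filter fun c => y.2 c ≤ i) =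
      μ.cells.filter fun c => t₀.2 c ≤ auxS w i := by
    intro i
    have hSn : auxS w i ≤ n := by have := auxS_le w i; omega
    apply Finset.eq_of_subset_of_card_le
    · intro c hcm
      have hcm' := Finset.mem_filter.1 hcm
      refine Finset.mem_filter.2 ⟨hcm'.1, ?_⟩
      have hsub2 : (μ.cells.filter fun b => t₀.2 b ≤ t₀.2 c) ⊆
          μ.cells.filter fun b => y.2 b ≤ i := by
        intro b hbm
        have hbm' := Finset.mem_filter.1 hbm
        exact Finset.mem_filter.2
          ⟨hbm'.1, le_trans (hmono b hbm'.1 c hcm'.1 hbm'.2) hcm'.2⟩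
      have h1 := Finset.card_le_card hsub2
      rw [sdt_count hT₀ _ (hT₀.2.1 c hcm'.1).2] at h1
      rw [hcum' i] at h1
      omega
    · rw [hcum' i, sdt_count hT₀ _ hSn]
  have hly : ∀ c, y.2 c = L c := by
    intro c
    by_cases hc : c ∈ μ.cells
    · rw [hLmem _ hc]
      have hle1 : auxF w (t₀.2 c) ≤ y.2 c := by
        apply auxF_le
        have hcm : c ∈ μ.cells.filter fun b => y.2 b ≤ y.2 c :=
          Finset.mem_filter.2 ⟨hc, le_rfl⟩
        rw [hseg (y.2 c)] at hcm
        exact (Finset.mem_filter.1 hcm).2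
      have hle2 : y.2 c ≤ auxF w (t₀.2 c) := by
        have hcm : c ∈ μ.cells.filter fun b => t₀.2 b ≤ auxS w (auxF w (t₀.2 c)) :=
          Finset.mem_filter.2 ⟨hc, auxF_spec w (hex _ hc)⟩
        rw [← hseg (auxF w (t₀.2 c))] at hcm
        exact (Finset.mem_filter.1 hcm).2
      omega
    · rw [hS.2.2.1 c hc]
      exact (if_neg hc).symm
  exact Prod.ext hT (funext hly)
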